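/- For every natural number n, ∫_0^{π/2} (cos x)^n · sin(n x) dx = (1 / 2^{n+1}) · Σ_{k=1}^{n} 2^k / k. -/

import Mathlib

open Real in
lemma key_integral (n : ℕ) :
    ∫ x in (0 : ℝ)..(π / 2), Real.cos x ^ n * Real.sin (((n : ℝ) + 2) * x) =
      1 / ((n : ℝ) + 1) := by
  have hn : ((n : ℝ) + 1) ≠ 0 := by positivity
  have hderiv : ∀ x ∈ Set.uIcc (0 : ℝ) (π / 2),
      HasDerivAt (fun x => -(Real.cos x ^ (n + 1) * Real.cos (((n : ℝ) + 1) * x)) / ((n : ℝ) + 1))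
        (Real.cos x ^ n * Real.sin (((n : ℝ) + 2) * x)) x := by
    intro x _
    have h1 : HasDerivAt (fun x : ℝ => Real.cos x ^ (n + 1))
        (((n : ℝ) + 1) * Real.cos x ^ n * (-Real.sin x)) x := by
      have := (Real.hasDerivAt_cos x).fun_pow (n + 1)
      simpa [Nat.add_sub_cancel] using this
    have h2 : HasDerivAt (fun x : ℝ => Real.cos (((n : ℝ) + 1) * x))
        (-Real.sin (((n : ℝ) + 1) * x) * ((n : ℝ) + 1)) x := by
      have := (Real.hasDerivAt_cos (((n : ℝ) + 1) * x)).comp x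
        ((hasDerivAt_id x).const_mul ((n : ℝ) + 1))
      simpa [Function.comp_def] using this
    have h3 := ((h1.fun_mul h2).fun_neg).div_const ((n : ℝ) + 1)
    refine h3.congr_deriv ?_
    have hsin : Real.sin (((n : ℝ) + 2) * x)
        = Real.sin (((n : ℝ) + 1) * x) * Real.cos x + Real.cos (((n : ℝ) + 1) * x) * Real.sin x := by
      rw [show ((n : ℝ) + 2) * x = ((n : ℝ) + 1) * x + x by ring, Real.sin_add]
    rw [hsin]
    field_simp
    ring
  have hcont : IntervalIntegrable
      (fun x => Real.cos x ^ n * Real.sin (((n : ℝ) + 2) * x)) MeasureTheory.volume 0 (π / 2) := by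
    apply Continuous.intervalIntegrable
    continuity
  rw [intervalIntegral.integral_eq_sub_of_hasDerivAt hderiv hcont]
  simp [Real.cos_pi_div_two, zero_pow (Nat.succ_ne_zero n)]
  ring

open Real in
theorem statement_6 (n : ℕ) :
    ∫ x in (0 : ℝ)..(π / 2), (Real.cos x) ^ n * Real.sin (n * x) =
      (1 / 2 ^ (n + 1)) * ∑ k ∈ Finset.Icc 1 n, (2 : ℝ) ^ k / k := by
  induction n with
  | zero => simp
  | succ n ih =>
    have hn : ((n : ℝ) + 1) ≠ 0 := by positivity
    have hptwise : ∀ x : ℝ, Real.cos x ^ (n + 1) * Real.sin (((n : ℝ) + 1) * x)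
        = (Real.cos x ^ n * Real.sin ((n : ℝ) * x)
           + Real.cos x ^ n * Real.sin (((n : ℝ) + 2) * x)) / 2 := by
      intro x
      have hA : Real.sin (((n : ℝ) + 2) * x)
          = Real.sin (((n : ℝ) + 1) * x) * Real.cos x + Real.cos (((n : ℝ) + 1) * x) * Real.sin x := by
        rw [show ((n : ℝ) + 2) * x = ((n : ℝ) + 1) * x + x by ring, Real.sin_add]
      have hB : Real.sin ((n : ℝ) * x)
          = Real.sin (((n : ℝ) + 1) * x) * Real.cos x - Real.cos (((n : ℝ) + 1) * x) * Real.sin x := by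
        rw [show (n : ℝ) * x = ((n : ℝ) + 1) * x - x by ring, Real.sin_sub]
      rw [hA, hB]; ring
    have hI1 : IntervalIntegrable (fun x => Real.cos x ^ n * Real.sin ((n : ℝ) * x))
        MeasureTheory.volume 0 (π / 2) := by
      apply Continuous.intervalIntegrable; continuity
    have hI2 : IntervalIntegrable (fun x => Real.cos x ^ n * Real.sin (((n : ℝ) + 2) * x))
        MeasureTheory.volume 0 (π / 2) := by
      apply Continuous.intervalIntegrable; continuity
    have hLHS : ∫ x in (0 : ℝ)..(π / 2), Real.cos x ^ (n + 1) * Real.sin ((↑(n + 1) : ℝ) * x)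
        = ((∫ x in (0 : ℝ)..(π / 2), Real.cos x ^ n * Real.sin ((n : ℝ) * x))
           + (1 / ((n : ℝ) + 1))) / 2 := by
      push_cast
      simp only [hptwise]
      rw [intervalIntegral.integral_div, intervalIntegral.integral_add hI1 hI2, key_integral]
    rw [hLHS, ih, Finset.sum_Icc_succ_top (Nat.le_add_left 1 n)]
    have h2 : ((2:ℝ)^(n+1)) ≠ 0 := by positivity
    push_cast
    field_simp
    ring_nf
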